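/- (Bohl–Bohr type theorem for almost automorphic functions) Let f : ℝ → ℂ be almost automorphic and let F : ℝ → ℂ be a primitive of f, i.e. F is differentiable on ℝ with F' = f. Then F is almost automorphic if and only if F is bounded on ℝ. -/
import Mathlib


open Filter MeasureTheory

/-- A continuous function `f : ℝ → ℂ` is almost automorphic if for every sequence of reals
there is a subsequence along which the translates converge pointwise to some `g`, and the
back-translates of `g` converge pointwise to `f`. -/
def AlmostAutomorphic (f : ℝ → ℂ) : Prop :=
  Continuous f ∧ ∀ s : ℕ → ℝ, ∃ σ : ℕ → ℕ, StrictMono σ ∧ ∃ g : ℝ → ℂ,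
    (∀ x : ℝ, Tendsto (fun k => f (x + s (σ k))) atTop (nhds (g x))) ∧
    (∀ x : ℝ, Tendsto (fun k => g (x - s (σ k))) atTop (nhds (f x)))

lemma aa_bounded {F : ℝ → ℂ} (h : AlmostAutomorphic F) : ∃ C : ℝ, ∀ x, ‖F x‖ ≤ C := by
  by_contra hc
  push_neg at hc
  choose s hs using fun m : ℕ => hc m
  obtain ⟨σ, hσ, g, h1, _⟩ := h.2 s
  have h0 := (h1 0).norm
  simp only [zero_add] at h0
  have hT : Tendsto (fun k => ‖F (s (σ k))‖) atTop atTop := by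
    apply tendsto_atTop_mono (fun k => ?_) tendsto_natCast_atTop_atTop
    calc (k:ℝ) ≤ (σ k : ℝ) := Nat.cast_le.2 hσ.le_apply
    _ ≤ ‖F (s (σ k))‖ := (hs (σ k)).le
  exact not_tendsto_nhds_of_tendsto_atTop hT _ h0

lemma aa_primitive {f F : ℝ → ℂ} (hf : AlmostAutomorphic f)
    (hF : ∀ x : ℝ, HasDerivAt F (f x) x) {C : ℝ} (hC : ∀ x, ‖F x‖ ≤ C) :
    AlmostAutomorphic F := by
  have Fcont : Continuous F := continuous_iff_continuousAt.2 fun x => (hF x).continuousAt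
  obtain ⟨M, hM⟩ := aa_bounded hf
  have hfi : ∀ a b : ℝ, IntervalIntegrable f volume a b := hf.1.intervalIntegrable
  have FTC : ∀ a b : ℝ, (∫ t in a..b, f t) = F b - F a := fun a b =>
    intervalIntegral.integral_eq_sub_of_hasDerivAt (fun t _ => hF t) (hfi a b)
  refine ⟨Fcont, fun s => ?_⟩
  obtain ⟨σ₁, hσ₁, g, hg1, hg2⟩ := hf.2 s
  -- g is measurable and bounded
  have gmeas : Measurable g := by
    apply measurable_of_tendsto_metrizable
      (f := fun k x => f (x + s (σ₁ k)))
      (fun k => (hf.1.comp (continuous_id.add continuous_const)).measurable)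
    rw [tendsto_pi_nhds]
    exact hg1
  have gbd : ∀ x, ‖g x‖ ≤ M := fun x =>
    le_of_tendsto (hg1 x).norm (Eventually.of_forall fun k => hM _)
  have gii : ∀ a b : ℝ, IntervalIntegrable g volume a b := fun a b =>
    (intervalIntegrable_const (c := M)).mono_fun gmeas.aestronglyMeasurable
      (ae_of_all _ fun x => (gbd x).trans (le_abs_self M))
  -- second extraction: F (s (σ₁ (σ₂ k))) → L
  obtain ⟨L, -, σ₂, hσ₂, hL⟩ := (isCompact_closedBall (0:ℂ) C).tendsto_subseq
    (x := fun k => F (s (σ₁ k))) (fun k => Metric.mem_closedBall.2 (by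
      simpa [dist_eq_norm] using hC (s (σ₁ k))))
  -- dominated convergence helpers
  set H : ℝ → ℂ := fun x => ∫ τ in (0:ℝ)..x, g τ with hH
  have DCT1 : ∀ (w : ℕ → ℝ) (x : ℝ),
      (∀ y : ℝ, Tendsto (fun k => f (y + w k)) atTop (nhds (g y))) →
      Tendsto (fun k => ∫ τ in (0:ℝ)..x, f (τ + w k)) atTop (nhds (H x)) := by
    intro w x hw
    apply intervalIntegral.tendsto_integral_filter_of_dominated_convergence (fun _ => M)
    · exact Eventually.of_forall fun k =>
        (hf.1.comp (continuous_id.add continuous_const)).aestronglyMeasurable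
    · exact Eventually.of_forall fun k => ae_of_all _ fun τ _ => hM _
    · exact intervalIntegrable_const
    · exact ae_of_all _ fun τ _ => hw τ
  have DCT2 : ∀ (w : ℕ → ℝ) (x : ℝ),
      (∀ y : ℝ, Tendsto (fun k => g (y - w k)) atTop (nhds (f y))) →
      Tendsto (fun k => ∫ τ in (0:ℝ)..x, g (τ - w k)) atTop (nhds (∫ τ in (0:ℝ)..x, f τ)) := by
    intro w x hw
    apply intervalIntegral.tendsto_integral_filter_of_dominated_convergence (fun _ => M)
    · exact Eventually.of_forall fun k =>
        (gmeas.comp (measurable_id.sub_const (w k))).aestronglyMeasurable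
    · exact Eventually.of_forall fun k => ae_of_all _ fun τ _ => gbd _
    · exact intervalIntegrable_const
    · exact ae_of_all _ fun τ _ => hw τ
  -- translation identities
  have hFt : ∀ w x : ℝ, (∫ τ in (0:ℝ)..x, f (τ + w)) = F (x + w) - F w := by
    intro w x
    rw [intervalIntegral.integral_comp_add_right, zero_add, FTC]
  have hHsplit : ∀ w x : ℝ, H (x - w) = H (-w) + ∫ τ in (0:ℝ)..x, g (τ - w) := by
    intro w x
    rw [intervalIntegral.integral_comp_sub_right, zero_sub, hH]
    exact (intervalIntegral.integral_add_adjacent_intervals (gii 0 (-w)) (gii (-w) (x - w))).symm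
  -- H is bounded
  have hHbd : ∀ y : ℝ, ‖H y‖ ≤ 2 * C := by
    intro y
    have h1 := DCT1 (fun k => s (σ₁ (σ₂ k))) y (fun z => (hg1 z).comp hσ₂.tendsto_atTop)
    refine le_of_tendsto h1.norm (Eventually.of_forall fun k => ?_)
    rw [hFt]
    exact (norm_sub_le _ _).trans (by
      have := hC (y + s (σ₁ (σ₂ k))); have := hC (s (σ₁ (σ₂ k))); linarith)
  -- third extraction: H (-(w k)) converges to P
  obtain ⟨P, -, σ₃, hσ₃, hP⟩ := (isCompact_closedBall (0:ℂ) (2*C)).tendsto_subseq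
    (x := fun k => H (-(s (σ₁ (σ₂ k))))) (fun k => Metric.mem_closedBall.2 (by
      simpa [dist_eq_norm] using hHbd (-(s (σ₁ (σ₂ k))))))
  set σ : ℕ → ℕ := fun k => σ₁ (σ₂ (σ₃ k)) with hσdef
  have hσ : StrictMono σ := hσ₁.comp (hσ₂.comp hσ₃)
  set v : ℕ → ℝ := fun k => s (σ k) with hv
  have hg1v : ∀ x : ℝ, Tendsto (fun k => f (x + v k)) atTop (nhds (g x)) := fun x =>
    (hg1 x).comp ((hσ₂.comp hσ₃).tendsto_atTop)
  have hg2v : ∀ x : ℝ, Tendsto (fun k => g (x - v k)) atTop (nhds (f x)) := fun x =>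
    (hg2 x).comp ((hσ₂.comp hσ₃).tendsto_atTop)
  have hLv : Tendsto (fun k => F (v k)) atTop (nhds L) := hL.comp hσ₃.tendsto_atTop
  have hPv : Tendsto (fun k => H (-(v k))) atTop (nhds P) := by
    exact hP
  set G : ℝ → ℂ := fun x => L + H x with hG
  set c : ℂ := L + P - F 0 with hc
  have claim1 : ∀ x : ℝ, Tendsto (fun k => F (x + v k)) atTop (nhds (G x)) := by
    intro x
    have h1 := hLv.add (DCT1 v x hg1v)
    have h2 : (fun k => F (v k) + ∫ τ in (0:ℝ)..x, f (τ + v k)) = fun k => F (x + v k) := by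
      funext k; rw [hFt]; ring
    rwa [h2] at h1
  have claim2 : ∀ x : ℝ, Tendsto (fun k => G (x - v k)) atTop (nhds (F x + c)) := by
    intro x
    have h1 := (tendsto_const_nhds (x := L)).add (hPv.add (DCT2 v x hg2v))
    have h2 : (fun k => L + (H (-(v k)) + ∫ τ in (0:ℝ)..x, g (τ - v k)))
        = fun k => G (x - v k) := by
      funext k
      show L + (H (-(v k)) + ∫ τ in (0:ℝ)..x, g (τ - v k)) = L + H (x - v k)
      rw [hHsplit (v k) x]
    rw [h2] at h1
    have h3 : L + (P + ∫ τ in (0:ℝ)..x, f τ) = F x + c := by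
      rw [FTC, hc]; ring
    rwa [h3] at h1
  have key : ∀ n : ℕ, ∀ x : ℝ, ‖F x + (n:ℂ) * c‖ ≤ C := by
    intro n
    induction n with
    | zero => intro x; simpa using hC x
    | succ n ih =>
      have hGn : ∀ x : ℝ, ‖G x + (n:ℂ) * c‖ ≤ C := fun x =>
        le_of_tendsto ((claim1 x).add_const ((n:ℂ)*c)).norm
          (Eventually.of_forall fun k => ih _)
      intro x
      have h4 := ((claim2 x).add_const ((n:ℂ)*c)).norm
      have h5 : F x + ((n+1 : ℕ):ℂ) * c = (F x + c) + (n:ℂ)*c := by push_cast; ring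
      rw [h5]
      exact le_of_tendsto h4 (Eventually.of_forall fun k => hGn _)
  have hc0 : c = 0 := by
    by_contra hne
    obtain ⟨n, hn⟩ := exists_nat_gt ((2*C) / ‖c‖)
    have hcpos : 0 < ‖c‖ := norm_pos_iff.2 hne
    have h6 : (n:ℝ) * ‖c‖ ≤ 2 * C := by
      have h7 := key n 0
      have h8 := hC 0
      calc (n:ℝ) * ‖c‖ = ‖(n:ℂ) * c‖ := by rw [norm_mul]; simp
      _ = ‖(F 0 + (n:ℂ)*c) - F 0‖ := by rw [add_sub_cancel_left]
      _ ≤ ‖F 0 + (n:ℂ)*c‖ + ‖F 0‖ := norm_sub_le _ _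
      _ ≤ 2 * C := by linarith
    rw [div_lt_iff₀ hcpos] at hn
    linarith
  refine ⟨σ, hσ, G, claim1, fun x => ?_⟩
  have h9 := claim2 x
  rwa [hc0, add_zero] at h9

/-- Bohl-Bohr type theorem: a primitive of an almost automorphic function is almost
automorphic if and only if it is bounded. -/
theorem almostAutomorphic_primitive_iff_bounded (f F : ℝ → ℂ)
    (hf : AlmostAutomorphic f)
    (hF : ∀ x : ℝ, HasDerivAt F (f x) x) :
    AlmostAutomorphic F ↔ ∃ C : ℝ, ∀ x : ℝ, ‖F x‖ ≤ C := by
  constructor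
  · exact fun h => aa_bounded h
  · rintro ⟨C, hC⟩
    exact aa_primitive hf hF hC
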